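/- Suppose M := sup_{t≥0}‖L(t)‖ < ∞ and the equation x'(t) = L(t)x_t is shadowable. Then there exists Q' > 0 such that ‖T(t,s)φ‖ ≤ Q'‖φ‖ for all 0 ≤ t ≤ s and all φ ∈ 𝒰(s), where T(t,s) for t ≤ s denotes the inverse of T(s,t)|_{𝒰(t)} : 𝒰(t) → 𝒰(s). -/

import Mathlib

open Set

noncomputable section

/-- The Euclidean state space ℝ^d. -/
abbrev Rd (d : ℕ) : Type := EuclideanSpace ℝ (Fin d)

/-- The phase space C = C([-r,0], ℝ^d) with the supremum norm. -/
abbrev Ph (d : ℕ) (r : ℝ) : Type := C(Set.Icc (-r) (0:ℝ), Rd d)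

/-- The segment x_t ∈ C of a continuous function x : ℝ → ℝ^d, x_t(θ) = x(t+θ). -/
def seg (d : ℕ) (r : ℝ) (x : ℝ → Rd d) (hx : Continuous x) (t : ℝ) : Ph d r :=
  ⟨fun θ => x (t + θ.1), hx.comp (continuous_const.add continuous_subtype_val)⟩

/-- `x` is a solution of x'(t) = L(t)x_t on [s, ∞) (right-hand derivative at s). -/
def IsSol (d : ℕ) (r : ℝ) (L : ℝ → (Ph d r →L[ℝ] Rd d)) (s : ℝ)
    (x : ℝ → Rd d) (hx : Continuous x) : Prop :=
  ∀ t, s ≤ t → HasDerivWithinAt x (L t (seg d r x hx t)) (Set.Ici s) t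

/-- `T` is the solution operator family of x'(t) = L(t)x_t :
for every s ≥ 0 and φ ∈ C there is a solution x on [s,∞) with x_s = φ and x_t = T(t,s)φ. -/
def IsSolOp (d : ℕ) (r : ℝ) (L : ℝ → (Ph d r →L[ℝ] Rd d))
    (T : ℝ → ℝ → (Ph d r →L[ℝ] Ph d r)) : Prop :=
  ∀ s, 0 ≤ s → ∀ φ : Ph d r, ∃ (x : ℝ → Rd d) (hx : Continuous x),
    IsSol d r L s x hx ∧ seg d r x hx s = φ ∧ ∀ t, s ≤ t → seg d r x hx t = T t s φ

/-- The evolution family property of the solution operators. -/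
def Cocycle (d : ℕ) (r : ℝ) (T : ℝ → ℝ → (Ph d r →L[ℝ] Ph d r)) : Prop :=
  (∀ s, 0 ≤ s → T s s = ContinuousLinearMap.id ℝ (Ph d r)) ∧
  ∀ τ t s, 0 ≤ s → s ≤ t → t ≤ τ → T τ s = (T τ t).comp (T t s)

/-- Uniqueness of solutions with a given initial segment at time s. -/
def UniqueSol (d : ℕ) (r : ℝ) (L : ℝ → (Ph d r →L[ℝ] Rd d)) : Prop :=
  ∀ s, 0 ≤ s → ∀ (x y : ℝ → Rd d) (hx : Continuous x) (hy : Continuous y),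
    IsSol d r L s x hx → IsSol d r L s y hy → seg d r x hx s = seg d r y hy s →
    ∀ t, s - r ≤ t → x t = y t

/-- Eq. x'(t) = L(t)x_t is shadowable. -/
def Shadowable (d : ℕ) (r : ℝ) (L : ℝ → (Ph d r →L[ℝ] Rd d)) : Prop :=
  ∀ ε, 0 < ε → ∃ δ, 0 < δ ∧ ∀ (y yd : ℝ → Rd d) (hy : Continuous y),
    ContinuousOn yd (Set.Ici 0) →
    (∀ t, 0 ≤ t → HasDerivWithinAt y (yd t) (Set.Ici 0) t) →
    (∀ t, 0 ≤ t → ‖yd t - L t (seg d r y hy t)‖ ≤ δ) →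
    ∃ (x : ℝ → Rd d) (hx : Continuous x), IsSol d r L 0 x hx ∧
      ∀ t, 0 ≤ t → ‖seg d r x hx t - seg d r y hy t‖ ≤ ε

/-- Eq. x'(t) = L(t)x_t is Hyers–Ulam stable. -/
def HyersUlam (d : ℕ) (r : ℝ) (L : ℝ → (Ph d r →L[ℝ] Rd d)) : Prop :=
  ∃ κ, 0 < κ ∧ ∀ δ, 0 < δ → ∀ (y yd : ℝ → Rd d) (hy : Continuous y),
    ContinuousOn yd (Set.Ici 0) →
    (∀ t, 0 ≤ t → HasDerivWithinAt y (yd t) (Set.Ici 0) t) →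
    (∀ t, 0 ≤ t → ‖yd t - L t (seg d r y hy t)‖ ≤ δ) →
    ∃ (x : ℝ → Rd d) (hx : Continuous x), IsSol d r L 0 x hx ∧
      ∀ t, 0 ≤ t → ‖seg d r x hx t - seg d r y hy t‖ ≤ κ * δ

/-- The stable subspace 𝒮(s) = {φ ∈ C : sup_{t ≥ s} ‖T(t,s)φ‖ < ∞}. -/
def stableSub (d : ℕ) (r : ℝ) (T : ℝ → ℝ → (Ph d r →L[ℝ] Ph d r)) (s : ℝ) :
    Submodule ℝ (Ph d r) where
  carrier := {φ | ∃ M, ∀ t, s ≤ t → ‖T t s φ‖ ≤ M}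
  add_mem' := by
    rintro a b ⟨Ma, hMa⟩ ⟨Mb, hMb⟩
    refine ⟨Ma + Mb, fun t ht => ?_⟩
    calc ‖T t s (a + b)‖ = ‖T t s a + T t s b‖ := by rw [map_add]
    _ ≤ ‖T t s a‖ + ‖T t s b‖ := norm_add_le _ _
    _ ≤ Ma + Mb := add_le_add (hMa t ht) (hMb t ht)
  zero_mem' := ⟨0, fun t ht => by simp⟩
  smul_mem' := by
    rintro c a ⟨Ma, hMa⟩
    refine ⟨‖c‖ * Ma, fun t ht => ?_⟩
    rw [map_smul]
    have h1 : ‖c • (T t s) a‖ = ‖c‖ * ‖(T t s) a‖ := @norm_smul ℝ (Ph d r) _ _ _ _ c _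
    rw [h1]
    exact mul_le_mul_of_nonneg_left (hMa t ht) (norm_nonneg c)

/-- Eq. x'(t) = L(t)x_t admits an exponential dichotomy (with solution operators T). -/
def ExpDich (d : ℕ) (r : ℝ) (T : ℝ → ℝ → (Ph d r →L[ℝ] Ph d r)) : Prop :=
  ∃ (P : ℝ → (Ph d r →L[ℝ] Ph d r)) (D lam : ℝ), 0 < D ∧ 0 < lam ∧
    (∀ t, 0 ≤ t → (P t).comp (P t) = P t) ∧
    (∀ t s, 0 ≤ s → s ≤ t → (P t).comp (T t s) = (T t s).comp (P s)) ∧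
    (∀ t s, 0 ≤ s → s ≤ t →
      Set.BijOn (⇑(T t s)) (LinearMap.ker (P s : Ph d r →ₗ[ℝ] Ph d r) : Set (Ph d r))
        (LinearMap.ker (P t : Ph d r →ₗ[ℝ] Ph d r) : Set (Ph d r))) ∧
    (∀ t s, 0 ≤ s → s ≤ t → ‖(T t s).comp (P s)‖ ≤ D * Real.exp (-lam * (t - s))) ∧
    (∀ t s, 0 ≤ t → t ≤ s → ∀ φ ∈ LinearMap.ker (P t : Ph d r →ₗ[ℝ] Ph d r),
      ‖φ‖ ≤ D * Real.exp (-lam * (s - t)) * ‖T s t φ‖)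

section Aux

variable {d : ℕ} {r : ℝ} {L : ℝ → (Ph d r →L[ℝ] Rd d)} {T : ℝ → ℝ → (Ph d r →L[ℝ] Ph d r)}

lemma seg_apply (x : ℝ → Rd d) (hx : Continuous x) (t : ℝ) (θ : Set.Icc (-r) (0:ℝ)) :
    seg d r x hx t θ = x (t + θ.1) := rfl

lemma seg_continuous (x : ℝ → Rd d) (hx : Continuous x) :
    Continuous (fun t => seg d r x hx t) := by
  apply ContinuousMap.continuous_of_continuous_uncurry
  exact hx.comp (continuous_fst.add (continuous_subtype_val.comp continuous_snd))

lemma norm_apply_le_seg (x : ℝ → Rd d) (hx : Continuous x) (t : ℝ) (θ : Set.Icc (-r) (0:ℝ)) :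
    ‖x (t + θ.1)‖ ≤ ‖seg d r x hx t‖ :=
  (seg d r x hx t).norm_coe_le_norm θ

lemma norm_pt_le_seg (hr : 0 ≤ r) (x : ℝ → Rd d) (hx : Continuous x) (t : ℝ) :
    ‖x t‖ ≤ ‖seg d r x hx t‖ := by
  have := norm_apply_le_seg x hx t ⟨0, Set.mem_Icc.2 ⟨neg_nonpos.mpr hr, le_rfl⟩⟩
  simpa using this

lemma seg_sub (x y : ℝ → Rd d) (hx : Continuous x) (hy : Continuous y) (t : ℝ) :
    seg d r (fun τ => x τ - y τ) (hx.sub hy) t = seg d r x hx t - seg d r y hy t := by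
  ext θ; rfl

lemma seg_smul (c : ℝ) (x : ℝ → Rd d) (hx : Continuous x) (t : ℝ) :
    seg d r (fun τ => c • x τ) (hx.const_smul c) t = c • seg d r x hx t := by
  ext θ; rfl

lemma isSol_smul {s : ℝ} {x : ℝ → Rd d} {hx : Continuous x} (c : ℝ)
    (h : IsSol d r L s x hx) : IsSol d r L s (fun τ => c • x τ) (hx.const_smul c) := by
  intro t ht
  rw [seg_smul, map_smul]
  exact (h t ht).const_smul c

lemma isSol_sub {s : ℝ} {x y : ℝ → Rd d} {hx : Continuous x} {hy : Continuous y}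
    (h1 : IsSol d r L s x hx) (h2 : IsSol d r L s y hy) :
    IsSol d r L s (fun τ => x τ - y τ) (hx.sub hy) := by
  intro t ht
  rw [seg_sub x y hx hy, map_sub]
  exact (h1 t ht).sub (h2 t ht)


lemma st_deriv_cont : Continuous (deriv Real.smoothTransition) :=
  (Real.smoothTransition.contDiff (n := 2)).continuous_deriv one_le_two

lemma st_hasDerivAt (u : ℝ) :
    HasDerivAt Real.smoothTransition (deriv Real.smoothTransition u) u :=
  (((Real.smoothTransition.contDiff (n := 1)).differentiable one_ne_zero) u).hasDerivAt

lemma st_deriv_zero_of_neg {u : ℝ} (hu : u < 0) : deriv Real.smoothTransition u = 0 := by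
  have h : Real.smoothTransition =ᶠ[nhds u] fun _ => (0:ℝ) :=
    Filter.eventually_of_mem (Iio_mem_nhds hu) fun z hz => Real.smoothTransition.zero_of_nonpos (le_of_lt hz)
  rw [h.deriv_eq, deriv_const]

lemma st_deriv_zero_of_gt {u : ℝ} (hu : 1 < u) : deriv Real.smoothTransition u = 0 := by
  have h : Real.smoothTransition =ᶠ[nhds u] fun _ => (1:ℝ) :=
    Filter.eventually_of_mem (Ioi_mem_nhds hu) fun z hz => Real.smoothTransition.one_of_one_le (le_of_lt hz)
  rw [h.deriv_eq, deriv_const]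

lemma st_deriv_zero_of_nonpos {u : ℝ} (hu : u ≤ 0) : deriv Real.smoothTransition u = 0 := by
  rcases lt_or_eq_of_le hu with h | h
  · exact st_deriv_zero_of_neg h
  · subst h
    have h1 : Filter.Tendsto (deriv Real.smoothTransition) (nhdsWithin 0 (Set.Iio 0))
        (nhds (deriv Real.smoothTransition 0)) :=
      (st_deriv_cont.tendsto 0).mono_left nhdsWithin_le_nhds
    have h2 : Filter.Tendsto (deriv Real.smoothTransition) (nhdsWithin 0 (Set.Iio 0))
        (nhds 0) := by
      apply Filter.Tendsto.congr' _ tendsto_const_nhds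
      exact Filter.eventually_of_mem self_mem_nhdsWithin fun z hz => (st_deriv_zero_of_neg hz).symm
    exact tendsto_nhds_unique h1 h2

lemma st_deriv_zero_of_one_le {u : ℝ} (hu : 1 ≤ u) : deriv Real.smoothTransition u = 0 := by
  rcases lt_or_eq_of_le hu with h | h
  · exact st_deriv_zero_of_gt h
  · subst h
    have h1 : Filter.Tendsto (deriv Real.smoothTransition) (nhdsWithin 1 (Set.Ioi 1))
        (nhds (deriv Real.smoothTransition 1)) :=
      (st_deriv_cont.tendsto 1).mono_left nhdsWithin_le_nhds
    have h2 : Filter.Tendsto (deriv Real.smoothTransition) (nhdsWithin 1 (Set.Ioi 1))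
        (nhds 0) := by
      apply Filter.Tendsto.congr' _ tendsto_const_nhds
      exact Filter.eventually_of_mem self_mem_nhdsWithin fun z hz => (st_deriv_zero_of_gt hz).symm
    exact tendsto_nhds_unique h1 h2

lemma st_deriv_bound : ∃ K : ℝ, 0 ≤ K ∧ ∀ u, |deriv Real.smoothTransition u| ≤ K := by
  obtain ⟨C, hC⟩ := (isCompact_Icc (a := (0:ℝ)) (b := 1)).exists_bound_of_continuousOn
    st_deriv_cont.continuousOn
  refine ⟨max C 0, le_max_right _ _, fun u => ?_⟩
  rcases le_or_gt u 0 with h | h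
  · simp [st_deriv_zero_of_nonpos h]
  rcases le_or_gt 1 u with h1 | h1
  · simp [st_deriv_zero_of_one_le h1]
  · exact le_trans (by simpa [Real.norm_eq_abs] using hC u ⟨h.le, h1.le⟩) (le_max_left _ _)

lemma gron (hr : 0 ≤ r) {M : ℝ} (hM : ∀ t, 0 ≤ t → ‖L t‖ ≤ M)
    (hL : ContinuousOn L (Set.Ici 0))
    {x : ℝ → Rd d} {hx : Continuous x} (hsol : IsSol d r L 0 x hx)
    {s τ : ℝ} (hs : 0 ≤ s) (hτ : s ≤ τ) :
    ‖seg d r x hx τ‖ ≤ ‖seg d r x hx s‖ * Real.exp (M * (τ - s)) := by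
  have hM0 : 0 ≤ M := le_trans (ContinuousLinearMap.opNorm_nonneg (L 0)) (hM 0 le_rfl)
  set g : ℝ → ℝ := fun u => ‖seg d r x hx u‖ with hgdef
  have hg : Continuous g := (seg_continuous x hx).norm
  have hgnn : ∀ u, 0 ≤ g u := fun u => norm_nonneg _
  set v : ℝ → Rd d := fun u => L u (seg d r x hx u) with hvdef
  have hvOn : ContinuousOn v (Set.Ici 0) :=
    hL.clm_apply (seg_continuous x hx).continuousOn
  -- FTC representation
  have key : ∀ w, s ≤ w → x w = x s + ∫ u in s..w, v u := by
    intro w hw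
    have hIcc : Set.Icc s w ⊆ Set.Ici (0:ℝ) := fun z hz => le_trans hs hz.1
    have hint : IntervalIntegrable v MeasureTheory.volume s w := by
      rw [intervalIntegrable_iff_integrableOn_Icc_of_le hw]
      exact (hvOn.mono hIcc).integrableOn_compact isCompact_Icc
    have := intervalIntegral.integral_eq_sub_of_hasDeriv_right_of_le hw
      hx.continuousOn
      (fun u hu => ((hsol u (le_trans hs hu.1.le)).mono
        (fun z hz => le_trans (le_trans hs hu.1.le) hz.le)))
      hint
    rw [this]; abel
  set G : ℝ → ℝ := fun w => ∫ u in s..w, g u with hGdef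
  have hG : ∀ w, HasDerivAt G (g w) w := fun w => (hg.integral_hasStrictDerivAt s w).hasDerivAt
  have hGnn : ∀ w, s ≤ w → 0 ≤ G w := fun w hw =>
    intervalIntegral.integral_nonneg hw (fun u _ => hgnn u)
  have claim : ∀ w, s ≤ w → g w ≤ g s + M * G w := by
    intro w hw
    have hC0 : 0 ≤ g s + M * G w := add_nonneg (hgnn s) (mul_nonneg hM0 (hGnn w hw))
    refine (ContinuousMap.norm_le _ hC0).2 fun θ => ?_
    show ‖x (w + θ.1)‖ ≤ g s + M * G w
    rcases le_or_gt (w + θ.1) s with hws | hws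
    · have hmem : w + θ.1 - s ∈ Set.Icc (-r) (0:ℝ) := by
        have h1 := θ.2.1
        have h2 := θ.2.2
        constructor <;> [linarith; linarith]
      have heq : x (w + θ.1) = seg d r x hx s ⟨w + θ.1 - s, hmem⟩ := by
        rw [seg_apply]; ring_nf
      rw [heq]
      exact le_trans ((seg d r x hx s).norm_coe_le_norm _)
        (le_add_of_nonneg_right (mul_nonneg hM0 (hGnn w hw)))
    · have hsw : s ≤ w + θ.1 := hws.le
      have hwθw : w + θ.1 ≤ w := by have := θ.2.2; linarith
      rw [key (w + θ.1) hsw]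
      have hIcc : Set.Icc s (w + θ.1) ⊆ Set.Ici (0:ℝ) := fun z hz => le_trans hs hz.1
      have hintv : IntervalIntegrable v MeasureTheory.volume s (w + θ.1) := by
        rw [intervalIntegrable_iff_integrableOn_Icc_of_le hsw]
        exact (hvOn.mono hIcc).integrableOn_compact isCompact_Icc
      have h1 : ‖x s + ∫ u in s..(w + θ.1), v u‖ ≤ ‖x s‖ + ‖∫ u in s..(w + θ.1), v u‖ :=
        norm_add_le _ _
      have h2 : ‖∫ u in s..(w + θ.1), v u‖ ≤ ∫ u in s..(w + θ.1), ‖v u‖ :=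
        intervalIntegral.norm_integral_le_integral_norm hsw
      have h3 : (∫ u in s..(w + θ.1), ‖v u‖) ≤ ∫ u in s..(w + θ.1), M * g u := by
        apply intervalIntegral.integral_mono_on hsw hintv.norm
          ((continuous_const.mul hg).intervalIntegrable _ _)
        intro u hu
        calc ‖v u‖ ≤ ‖L u‖ * ‖seg d r x hx u‖ := (L u).le_opNorm _
        _ ≤ M * g u := mul_le_mul_of_nonneg_right (hM u (le_trans hs hu.1)) (hgnn u)
      have h4 : (∫ u in s..(w + θ.1), M * g u) ≤ ∫ u in s..w, M * g u := by
        apply intervalIntegral.integral_mono_interval le_rfl hsw hwθw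
        · exact Filter.Eventually.of_forall fun u => mul_nonneg hM0 (hgnn u)
        · exact (continuous_const.mul hg).intervalIntegrable _ _
      have h5 : (∫ u in s..w, M * g u) = M * G w := intervalIntegral.integral_const_mul _ _
      have h6 : ‖x s‖ ≤ g s := norm_pt_le_seg hr x hx s
      linarith
  -- Gronwall
  have hGb := norm_le_gronwallBound_of_norm_deriv_right_le (f := G) (f' := g)
    (a := s) (b := τ) (δ := 0) (K := M) (ε := g s)
    (fun w _ => (hG w).continuousAt.continuousWithinAt)
    (fun w _ => (hG w).hasDerivWithinAt)
    (by simp [hGdef])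
    (fun w hw => by
      rw [Real.norm_eq_abs, Real.norm_eq_abs, abs_of_nonneg (hgnn w),
        abs_of_nonneg (hGnn w hw.1)]
      linarith [claim w hw.1])
  have hGτ := hGb τ ⟨hτ, le_rfl⟩
  rw [Real.norm_eq_abs, abs_of_nonneg (hGnn τ hτ)] at hGτ
  have heq : g s + M * gronwallBound 0 M (g s) (τ - s) = g s * Real.exp (M * (τ - s)) := by
    rcases eq_or_ne M 0 with h | h
    · simp [h, gronwallBound_K0]
    · rw [gronwallBound_of_K_ne_0 h]
      field_simp
      ring
  have := claim τ hτ
  have hfin : M * G τ ≤ M * gronwallBound 0 M (g s) (τ - s) :=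
    mul_le_mul_of_nonneg_left hGτ hM0
  calc ‖seg d r x hx τ‖ = g τ := rfl
  _ ≤ g s + M * G τ := claim τ hτ
  _ ≤ g s + M * gronwallBound 0 M (g s) (τ - s) := by linarith
  _ = ‖seg d r x hx s‖ * Real.exp (M * (τ - s)) := heq

lemma rep (hr : 0 ≤ r) {M : ℝ} (hM : ∀ t, 0 ≤ t → ‖L t‖ ≤ M)
    (hL : ContinuousOn L (Set.Ici 0)) (hT : IsSolOp d r L T)
    {x : ℝ → Rd d} {hx : Continuous x} (hsol : IsSol d r L 0 x hx) :
    ∀ τ, 0 ≤ τ → seg d r x hx τ = T τ 0 (seg d r x hx 0) := by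
  obtain ⟨y, hy, hsoly, hy0, hyT⟩ := hT 0 le_rfl (seg d r x hx 0)
  intro τ hτ
  have hz : IsSol d r L 0 (fun u => x u - y u) (hx.sub hy) := isSol_sub hsol hsoly
  have h0 : seg d r (fun u => x u - y u) (hx.sub hy) 0 = 0 := by
    rw [seg_sub x y hx hy, hy0, sub_self]
  have hb := gron (L := L) hr hM hL hz (le_rfl) hτ
  rw [h0, norm_zero, zero_mul] at hb
  have hz0 : seg d r (fun u => x u - y u) (hx.sub hy) τ = 0 :=
    norm_le_zero_iff.1 hb
  rw [seg_sub x y hx hy, sub_eq_zero] at hz0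
  rw [hz0, hyT τ hτ]

lemma ph_norm_smul (c : ℝ) (ξ : Ph d r) : ‖c • ξ‖ = |c| * ‖ξ‖ := by
  rw [← Real.norm_eq_abs]
  exact norm_smul c ξ

set_option synthInstance.maxHeartbeats 1000000 in
set_option maxHeartbeats 1000000 in
lemma baire_decomp (U : Submodule ℝ (Ph d r)) (hUfd : FiniteDimensional ℝ ↥U)
    (hUcompl : IsCompl (stableSub d r T 0) U) :
    ∃ W : ℝ, 0 < W ∧ ∀ ξ : Ph d r, ∃ u ∈ U, ‖u‖ ≤ W * ‖ξ‖ ∧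
      ∀ τ, 0 ≤ τ → ‖T τ 0 (ξ - u)‖ ≤ W * ‖ξ‖ := by
  classical
  set H : ℕ → Set (Ph d r) := fun N =>
    {φ | ∃ u, u ∈ U ∧ ‖u‖ ≤ (N:ℝ) ∧ ∀ τ, 0 ≤ τ → ‖T τ 0 (φ - u)‖ ≤ (N:ℝ)} with hHdef
  have hclosed : ∀ N, IsClosed (H N) := by
    intro N
    apply IsSeqClosed.isClosed
    intro φn p hmem hlim
    choose u hu hub hTb using hmem
    haveI : FiniteDimensional ℝ ↥U := hUfd
    have hcpt : IsCompact (Metric.closedBall (0:↥U) N) := isCompact_closedBall _ _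
    have hmemball : ∀ n, (⟨u n, hu n⟩ : ↥U) ∈ Metric.closedBall (0:↥U) N := by
      intro n
      exact mem_closedBall_zero_iff.mpr (hub n)
    obtain ⟨a, ha, ρ, hρ, htend⟩ := hcpt.tendsto_subseq hmemball
    have hucoe : Filter.Tendsto (fun k => u (ρ k)) Filter.atTop (nhds (a : Ph d r)) :=
      (continuous_subtype_val.tendsto a).comp htend
    have hφ : Filter.Tendsto (fun k => φn (ρ k)) Filter.atTop (nhds p) :=
      hlim.comp hρ.tendsto_atTop
    refine ⟨(a : Ph d r), a.2, ?_, ?_⟩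
    · exact mem_closedBall_zero_iff.mp ha
    · intro τ hτ
      have hcv : Filter.Tendsto (fun k => ‖T τ 0 (φn (ρ k) - u (ρ k))‖) Filter.atTop
          (nhds ‖T τ 0 (p - (a : Ph d r))‖) :=
        (((T τ 0).continuous.tendsto _).comp (hφ.sub hucoe)).norm
      exact le_of_tendsto hcv (Filter.Eventually.of_forall fun k => hTb (ρ k) τ hτ)
  have hcover : (⋃ N, H N) = Set.univ := by
    ext φ
    simp only [Set.mem_iUnion, Set.mem_univ, iff_true]
    obtain ⟨σ, uu, hσ, huU, hsum⟩ :=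
      Submodule.codisjoint_iff_exists_add_eq.mp hUcompl.codisjoint φ
    obtain ⟨C, hC⟩ := hσ
    obtain ⟨N, hN⟩ := exists_nat_ge (max C ‖uu‖)
    refine ⟨N, uu, huU, le_trans (le_max_right _ _) hN, fun τ hτ => ?_⟩
    have hφu : φ - uu = σ := by rw [← hsum]; abel
    rw [hφu]
    exact le_trans (hC τ hτ) (le_trans (le_max_left _ _) hN)
  obtain ⟨N, hNne⟩ := nonempty_interior_of_iUnion_of_closed hclosed hcover
  obtain ⟨φ₀, hφ₀⟩ := hNne
  obtain ⟨ρ₀, hρ₀pos, hball⟩ := Metric.isOpen_iff.1 isOpen_interior φ₀ hφ₀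
  have hball' : Metric.ball φ₀ ρ₀ ⊆ H N := le_trans hball interior_subset
  refine ⟨(4*((N:ℝ)+1))/ρ₀, by positivity, fun ξ => ?_⟩
  rcases eq_or_ne ξ 0 with rfl | hξ
  · exact ⟨0, U.zero_mem, by simp, fun τ hτ => by simp⟩
  · have hξn : 0 < ‖ξ‖ := norm_pos_iff.2 hξ
    set c : ℝ := ρ₀ / (2 * ‖ξ‖) with hcdef
    have hcpos : 0 < c := by positivity
    have hcne : c ≠ 0 := ne_of_gt hcpos
    have hcξ : c * ‖ξ‖ = ρ₀ / 2 := by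
      rw [hcdef]; field_simp
    have hζmem : φ₀ + c • ξ ∈ H N := by
      apply hball'
      rw [Metric.mem_ball, dist_eq_norm, add_sub_cancel_left, ph_norm_smul,
        abs_of_pos hcpos, hcξ]
      linarith
    have hφ₀mem : φ₀ ∈ H N := hball' (Metric.mem_ball_self hρ₀pos)
    obtain ⟨u₁, hu₁U, hu₁n, hu₁b⟩ := hζmem
    obtain ⟨u₂, hu₂U, hu₂n, hu₂b⟩ := hφ₀mem
    have hkey : ξ - c⁻¹ • (u₁ - u₂) = c⁻¹ • ((φ₀ + c • ξ - u₁) - (φ₀ - u₂)) := by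
      have h1 : (φ₀ + c • ξ - u₁) - (φ₀ - u₂) = c • ξ - (u₁ - u₂) := by abel
      have h2 : c⁻¹ • (c • ξ - (u₁ - u₂)) = c⁻¹ • (c • ξ) - c⁻¹ • (u₁ - u₂) :=
        smul_sub _ _ _
      have h3 : c⁻¹ • (c • ξ) = ξ := inv_smul_smul₀ hcne ξ
      rw [h1, h2, h3]
    have harith : c⁻¹ * ((N:ℝ) + (N:ℝ)) ≤ (4*((N:ℝ)+1))/ρ₀ * ‖ξ‖ := by
      have hcinv : c⁻¹ = 2 * ‖ξ‖ / ρ₀ := by rw [hcdef, inv_div]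
      rw [hcinv]
      rw [div_mul_eq_mul_div, div_mul_eq_mul_div, div_le_div_iff_of_pos_right hρ₀pos]
      nlinarith [Nat.cast_nonneg (α := ℝ) N]
    refine ⟨c⁻¹ • (u₁ - u₂), U.smul_mem _ (U.sub_mem hu₁U hu₂U), ?_, ?_⟩
    · rw [ph_norm_smul, abs_of_pos (by positivity : (0:ℝ) < c⁻¹)]
      refine le_trans ?_ harith
      exact mul_le_mul_of_nonneg_left
        (le_trans (norm_sub_le _ _) (add_le_add hu₁n hu₂n))
        (by positivity)
    · intro τ hτ
      rw [hkey, map_smul, map_sub, ph_norm_smul,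
        abs_of_pos (by positivity : (0:ℝ) < c⁻¹)]
      refine le_trans ?_ harith
      exact mul_le_mul_of_nonneg_left
        (le_trans (norm_sub_le _ _) (add_le_add (hu₁b τ hτ) (hu₂b τ hτ)))
        (by positivity)

lemma shadow_scaled {δ₁ : ℝ} (hδ₁ : 0 < δ₁)
    (hshad : ∀ (y yd : ℝ → Rd d) (hy : Continuous y),
      ContinuousOn yd (Set.Ici 0) →
      (∀ t, 0 ≤ t → HasDerivWithinAt y (yd t) (Set.Ici 0) t) →
      (∀ t, 0 ≤ t → ‖yd t - L t (seg d r y hy t)‖ ≤ δ₁) →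
      ∃ (x : ℝ → Rd d) (hx : Continuous x), IsSol d r L 0 x hx ∧
        ∀ t, 0 ≤ t → ‖seg d r x hx t - seg d r y hy t‖ ≤ 1)
    (y yd : ℝ → Rd d) (hy : Continuous y) (hydc : ContinuousOn yd (Set.Ici 0))
    (hyd : ∀ t, 0 ≤ t → HasDerivWithinAt y (yd t) (Set.Ici 0) t)
    {Δ : ℝ} (hΔ : 0 < Δ)
    (hdef : ∀ t, 0 ≤ t → ‖yd t - L t (seg d r y hy t)‖ ≤ Δ) :
    ∃ (x : ℝ → Rd d) (hx : Continuous x), IsSol d r L 0 x hx ∧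
      ∀ t, 0 ≤ t → ‖seg d r x hx t - seg d r y hy t‖ ≤ Δ / δ₁ := by
  set c : ℝ := δ₁ / Δ with hcdef
  have hc : 0 < c := by positivity
  have hcne : c ≠ 0 := ne_of_gt hc
  have hdef' : ∀ t, 0 ≤ t →
      ‖(fun τ => c • yd τ) t - L t (seg d r (fun τ => c • y τ) (hy.const_smul c) t)‖ ≤ δ₁ := by
    intro t htt
    have h1 : seg d r (fun τ => c • y τ) (hy.const_smul c) t = c • seg d r y hy t :=
      seg_smul c y hy t
    rw [h1, map_smul]
    have h2 : c • yd t - c • (L t (seg d r y hy t)) = c • (yd t - L t (seg d r y hy t)) :=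
      (smul_sub c _ _).symm
    show ‖c • yd t - c • (L t (seg d r y hy t))‖ ≤ δ₁
    rw [h2]
    have h3 : ‖c • (yd t - L t (seg d r y hy t))‖ = |c| * ‖yd t - L t (seg d r y hy t)‖ := by
      rw [← Real.norm_eq_abs]; exact norm_smul _ _
    rw [h3, abs_of_pos hc]
    calc c * ‖yd t - L t (seg d r y hy t)‖ ≤ c * Δ :=
          mul_le_mul_of_nonneg_left (hdef t htt) hc.le
    _ = δ₁ := by rw [hcdef]; field_simp
  obtain ⟨x₁, hx₁, hsol₁, hclose₁⟩ := hshad (fun τ => c • y τ) (fun τ => c • yd τ)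
    (hy.const_smul c) (hydc.const_smul c) (fun t htt => (hyd t htt).const_smul c) hdef'
  refine ⟨fun τ => c⁻¹ • x₁ τ, hx₁.const_smul c⁻¹, isSol_smul c⁻¹ hsol₁, ?_⟩
  intro t htt
  have h1 : seg d r (fun τ => c⁻¹ • x₁ τ) (hx₁.const_smul c⁻¹) t = c⁻¹ • seg d r x₁ hx₁ t :=
    seg_smul c⁻¹ x₁ hx₁ t
  rw [h1]
  have h2 : c⁻¹ • seg d r x₁ hx₁ t - seg d r y hy t
      = c⁻¹ • (seg d r x₁ hx₁ t - seg d r (fun τ => c • y τ) (hy.const_smul c) t) := by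
    rw [seg_smul c y hy t]
    have h3 : c⁻¹ • (seg d r x₁ hx₁ t - c • seg d r y hy t)
        = c⁻¹ • seg d r x₁ hx₁ t - c⁻¹ • (c • seg d r y hy t) := smul_sub _ _ _
    have h4 : c⁻¹ • (c • seg d r y hy t) = seg d r y hy t := inv_smul_smul₀ hcne _
    rw [h3, h4]
  rw [h2, ph_norm_smul, abs_of_pos (inv_pos.2 hc)]
  calc c⁻¹ * ‖seg d r x₁ hx₁ t - seg d r (fun τ => c • y τ) (hy.const_smul c) t‖
      ≤ c⁻¹ * 1 := mul_le_mul_of_nonneg_left (hclose₁ t htt) (inv_pos.2 hc).le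
  _ = Δ / δ₁ := by rw [hcdef]; field_simp

lemma le_of_forall_tail (A c K : ℝ) (hK : 0 < K)
    (h : ∀ η, 0 < η → A ≤ c + K * η) : A ≤ c := by
  by_contra hcon
  push_neg at hcon
  have hgap : 0 < A - c := sub_pos.2 hcon
  have h1 := h ((A - c) / (2 * K)) (div_pos hgap (by positivity))
  have h2 : K * ((A - c) / (2 * K)) = (A - c) / 2 := by field_simp
  rw [h2] at h1
  linarith


end Aux

set_option maxHeartbeats 2000000 in
/-- If L is uniformly bounded and Eq. x'(t) = L(t)x_t is shadowable, then
there exists Q' > 0 such that ‖T(t,s)φ‖ ≤ Q'‖φ‖ for 0 ≤ t ≤ s and φ ∈ 𝒰(s),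
where T(t,s) is the inverse of T(s,t)|_𝒰(t); equivalently, every ψ ∈ 𝒰(t)
satisfies ‖ψ‖ ≤ Q' ‖T(s,t)ψ‖. -/
theorem stmt13 (d : ℕ) (r : ℝ) (hr : 0 ≤ r)
    (L : ℝ → (Ph d r →L[ℝ] Rd d)) (hL : ContinuousOn L (Set.Ici 0))
    (T : ℝ → ℝ → (Ph d r →L[ℝ] Ph d r))
    (hT : IsSolOp d r L T) (hcoc : Cocycle d r T)
    (M : ℝ) (hM : ∀ t, 0 ≤ t → ‖L t‖ ≤ M)
    (hsh : Shadowable d r L)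
    (U : Submodule ℝ (Ph d r)) (hUfd : FiniteDimensional ℝ ↥U)
    (hUcompl : IsCompl (stableSub d r T 0) U) :
    ∃ Q', 0 < Q' ∧ ∀ t s, 0 ≤ t → t ≤ s → ∀ ψ ∈ U.map (T t 0 : Ph d r →ₗ[ℝ] Ph d r),
      ‖ψ‖ ≤ Q' * ‖T s t ψ‖ := by
  classical
  have hM0 : 0 ≤ M := le_trans (ContinuousLinearMap.opNorm_nonneg (L 0)) (hM 0 le_rfl)
  obtain ⟨δ₁, hδ₁, hshad⟩ := hsh 1 one_pos
  obtain ⟨W, hW, hdecomp⟩ := baire_decomp (T := T) U hUfd hUcompl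
  obtain ⟨Kα, hKα0, hKαb⟩ := st_deriv_bound
  set E : ℝ := Real.exp (M * (1 + r)) with hEdef
  have hE0 : 0 < E := Real.exp_pos _
  set C₂ : ℝ := (Kα + 2 * M) * E with hC₂def
  have hC₂0 : 0 ≤ C₂ := by positivity
  refine ⟨(W + 1) * C₂ / δ₁ + 1, by positivity, ?_⟩
  intro t s ht hts ψ hψ
  obtain ⟨φ, hφU, rfl⟩ := Submodule.mem_map.1 hψ
  change ‖T t 0 φ‖ ≤ ((W + 1) * C₂ / δ₁ + 1) * ‖T s t (T t 0 φ)‖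
  have hs0 : 0 ≤ s := le_trans ht hts
  have hTs0 : T s 0 φ = T s t (T t 0 φ) := by
    rw [hcoc.2 s t 0 le_rfl ht hts]; rfl
  rw [← hTs0]
  set b : ℝ := ‖T s 0 φ‖ with hbdef
  have hb0 : 0 ≤ b := norm_nonneg _
  obtain ⟨x, hx, hsolx, hx0, hxT⟩ := hT 0 le_rfl φ
  -- the cutoff function
  set α : ℝ → ℝ := fun τ => 1 - Real.smoothTransition (τ - s) with hαdef
  set να : ℝ → ℝ := fun τ => -(deriv Real.smoothTransition (τ - s)) with hναdef
  have hαderiv : ∀ τ, HasDerivAt α (να τ) τ := by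
    intro τ
    have h1 : HasDerivAt (fun τ : ℝ => Real.smoothTransition (τ - s))
        (deriv Real.smoothTransition (τ - s)) τ := by
      have := (st_hasDerivAt (τ - s)).comp τ ((hasDerivAt_id τ).sub_const s)
      rw [mul_one] at this
      exact this
    have h2 := (hasDerivAt_const τ (1:ℝ)).sub h1
    rw [zero_sub] at h2
    exact h2
  have hαcont : Continuous α := continuous_const.sub
    (Real.smoothTransition.continuous.comp (continuous_id.sub continuous_const))
  have hνα_cont : Continuous να :=
    (st_deriv_cont.comp (continuous_id.sub continuous_const)).neg
  have hα1 : ∀ τ, τ ≤ s → α τ = 1 := by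
    intro τ hτ
    simp [hαdef, Real.smoothTransition.zero_of_nonpos (show τ - s ≤ 0 by linarith)]
  have hα0' : ∀ τ, s + 1 ≤ τ → α τ = 0 := by
    intro τ hτ
    simp [hαdef, Real.smoothTransition.one_of_one_le (show (1:ℝ) ≤ τ - s by linarith)]
  have hαb : ∀ τ, |α τ| ≤ 1 := by
    intro τ
    rw [hαdef, abs_le]
    constructor
    · have := Real.smoothTransition.le_one (τ - s); dsimp only; linarith
    · have := Real.smoothTransition.nonneg (τ - s); dsimp only; linarith
  have hνα1 : ∀ τ, τ ≤ s → να τ = 0 := by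
    intro τ hτ
    simp [hναdef, st_deriv_zero_of_nonpos (show τ - s ≤ 0 by linarith)]
  have hνα0 : ∀ τ, s + 1 ≤ τ → να τ = 0 := by
    intro τ hτ
    simp [hναdef, st_deriv_zero_of_one_le (show (1:ℝ) ≤ τ - s by linarith)]
  have hναb : ∀ τ, |να τ| ≤ Kα := by
    intro τ
    rw [hναdef]
    simpa [abs_neg] using hKαb (τ - s)
  -- the pseudo-solution
  set y : ℝ → Rd d := fun τ => α τ • x τ with hydef
  have hy : Continuous y := hαcont.smul hx
  set yd : ℝ → Rd d := fun τ => α τ • (L τ (seg d r x hx τ)) + να τ • x τ with hyddef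
  have hydc : ContinuousOn yd (Set.Ici 0) := by
    apply ContinuousOn.add
    · exact hαcont.continuousOn.smul (hL.clm_apply (seg_continuous x hx).continuousOn)
    · exact (hνα_cont.smul hx).continuousOn
  have hyd : ∀ τ, 0 ≤ τ → HasDerivWithinAt y (yd τ) (Set.Ici 0) τ := fun τ hτ =>
    ((hαderiv τ).hasDerivWithinAt).smul (hsolx τ hτ)
  -- segment identities
  have hsegyx : ∀ τ, τ ≤ s → seg d r y hy τ = seg d r x hx τ := by
    intro τ hτ
    refine ContinuousMap.ext fun θ => ?_
    show α (τ + θ.1) • x (τ + θ.1) = x (τ + θ.1)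
    rw [hα1 _ (by linarith [θ.2.2] : τ + θ.1 ≤ s), one_smul]
  have hsegy0 : ∀ τ, s + 1 + r ≤ τ → seg d r y hy τ = 0 := by
    intro τ hτ
    refine ContinuousMap.ext fun θ => ?_
    show α (τ + θ.1) • x (τ + θ.1) = (0 : Ph d r) θ
    rw [hα0' _ (by linarith [θ.2.1] : s + 1 ≤ τ + θ.1), zero_smul]
    simp
  -- Gronwall bounds
  have hxseg_s : ‖seg d r x hx s‖ = b := by rw [hxT s hs0]
  have hgb : ∀ τ, s ≤ τ → τ ≤ s + 1 + r → ‖seg d r x hx τ‖ ≤ b * E := by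
    intro τ h1 h2
    have h3 := gron (L := L) hr hM hL hsolx hs0 h1
    rw [hxseg_s] at h3
    refine le_trans h3 (mul_le_mul_of_nonneg_left ?_ hb0)
    rw [hEdef]
    exact Real.exp_le_exp.2 (mul_le_mul_of_nonneg_left (by linarith) hM0)
  -- defect bound
  have hdefect : ∀ τ, 0 ≤ τ → ‖yd τ - L τ (seg d r y hy τ)‖ ≤ C₂ * b := by
    intro τ hτ
    rcases le_or_gt τ s with hcase | hcase
    · have h1 : yd τ = L τ (seg d r x hx τ) := by
        rw [hyddef]; dsimp only
        rw [hα1 τ hcase, hνα1 τ hcase, one_smul, zero_smul, add_zero]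
      rw [hsegyx τ hcase, h1, sub_self, norm_zero]
      positivity
    · have hkey : yd τ - L τ (seg d r y hy τ)
          = L τ (α τ • seg d r x hx τ - seg d r y hy τ) + να τ • x τ := by
        rw [hyddef]; dsimp only
        rw [map_sub, map_smul]
        abel
      rw [hkey]
      have hsegbd : ‖α τ • seg d r x hx τ - seg d r y hy τ‖ ≤ 2 * (b * E) := by
        rcases le_or_gt τ (s + 1 + r) with h2 | h2
        · refine (ContinuousMap.norm_le _ (by positivity)).2 fun θ => ?_
          show ‖α τ • x (τ + θ.1) - α (τ + θ.1) • x (τ + θ.1)‖ ≤ 2 * (b * E)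
          have hs1 : α τ • x (τ + θ.1) - α (τ + θ.1) • x (τ + θ.1)
              = (α τ - α (τ + θ.1)) • x (τ + θ.1) := (sub_smul _ _ _).symm
          have hs2 : ‖(α τ - α (τ + θ.1)) • x (τ + θ.1)‖
              = |α τ - α (τ + θ.1)| * ‖x (τ + θ.1)‖ := by
            rw [← Real.norm_eq_abs]; exact norm_smul _ _
          rw [hs1, hs2]
          have hs3 : |α τ - α (τ + θ.1)| ≤ 2 := by
            have ha1 := abs_le.1 (hαb τ)
            have ha2 := abs_le.1 (hαb (τ + θ.1))
            rw [abs_le]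
            constructor <;> [linarith [ha1.1, ha2.2]; linarith [ha1.2, ha2.1]]
          have hs4 : ‖x (τ + θ.1)‖ ≤ b * E :=
            le_trans (norm_apply_le_seg x hx τ θ) (hgb τ hcase.le h2)
          exact mul_le_mul hs3 hs4 (norm_nonneg _) (by norm_num)
        · rw [hsegy0 τ h2.le]
          have hατ : α τ = 0 := hα0' τ (by linarith)
          rw [hατ]
          have : (0:ℝ) • seg d r x hx τ = 0 := zero_smul ℝ (seg d r x hx τ)
          rw [this, sub_zero, norm_zero]
          positivity
      have hνterm : ‖να τ • x τ‖ ≤ Kα * (b * E) := by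
        rcases le_or_gt τ (s + 1) with h2 | h2
        · have h3 : ‖x τ‖ ≤ b * E :=
            le_trans (norm_pt_le_seg hr x hx τ) (hgb τ hcase.le (by linarith))
          have h4 : ‖να τ • x τ‖ = |να τ| * ‖x τ‖ := by
            rw [← Real.norm_eq_abs]; exact norm_smul _ _
          rw [h4]
          exact mul_le_mul (hναb τ) h3 (norm_nonneg _) hKα0
        · rw [hνα0 τ h2.le]
          have : (0:ℝ) • x τ = 0 := zero_smul ℝ (x τ)
          rw [this, norm_zero]
          positivity
      calc ‖L τ (α τ • seg d r x hx τ - seg d r y hy τ) + να τ • x τ‖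
          ≤ ‖L τ (α τ • seg d r x hx τ - seg d r y hy τ)‖ + ‖να τ • x τ‖ := norm_add_le _ _
      _ ≤ M * (2 * (b * E)) + Kα * (b * E) := by
          refine add_le_add (le_trans ((L τ).le_opNorm _) ?_) hνterm
          exact mul_le_mul (hM τ hτ) hsegbd (norm_nonneg _) hM0
      _ = C₂ * b := by rw [hC₂def]; ring
  -- the key estimate
  have key : ∀ η, 0 < η → ‖T t 0 φ‖ ≤ (W + 1) * ((C₂ * b + η) / δ₁) := by
    intro η hη
    have hΔpos : 0 < C₂ * b + η := by positivity
    obtain ⟨xh, hxh, hsolh, hclose⟩ := shadow_scaled hδ₁ hshad y yd hy hydc hyd hΔpos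
      (fun τ hτ => le_trans (hdefect τ hτ) (by linarith))
    set B : ℝ := (C₂ * b + η) / δ₁ with hBdef
    have hB0 : 0 ≤ B := by positivity
    have hrep : ∀ τ, 0 ≤ τ → seg d r xh hxh τ = T τ 0 (seg d r xh hxh 0) :=
      rep hr hM hL hT hsolh
    set χ : Ph d r := seg d r xh hxh 0 with hχdef
    -- χ is in the stable subspace
    have hybd : ∀ τ, 0 ≤ τ → ‖seg d r y hy τ‖ ≤ ‖φ‖ * Real.exp (M * (s + 1 + r)) := by
      intro τ hτ
      rcases le_or_gt τ (s + 1 + r) with hc | hc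
      · have h3 : ‖seg d r y hy τ‖ ≤ ‖seg d r x hx τ‖ := by
          refine (ContinuousMap.norm_le _ (norm_nonneg _)).2 fun θ => ?_
          show ‖α (τ + θ.1) • x (τ + θ.1)‖ ≤ _
          have h4 : ‖α (τ + θ.1) • x (τ + θ.1)‖ = |α (τ + θ.1)| * ‖x (τ + θ.1)‖ := by
            rw [← Real.norm_eq_abs]; exact norm_smul _ _
          rw [h4]
          calc |α (τ + θ.1)| * ‖x (τ + θ.1)‖ ≤ 1 * ‖seg d r x hx τ‖ :=
                mul_le_mul (hαb _) (norm_apply_le_seg x hx τ θ) (norm_nonneg _) zero_le_one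
          _ = ‖seg d r x hx τ‖ := one_mul _
        have h5 := gron (L := L) hr hM hL hsolx le_rfl hτ
        rw [hx0] at h5
        have h6 : Real.exp (M * (τ - 0)) ≤ Real.exp (M * (s + 1 + r)) :=
          Real.exp_le_exp.2 (mul_le_mul_of_nonneg_left (by linarith) hM0)
        exact le_trans h3 (le_trans h5
          (mul_le_mul_of_nonneg_left h6 (norm_nonneg φ)))
      · rw [hsegy0 τ hc.le, norm_zero]
        positivity
    have hχbd : ∀ τ, 0 ≤ τ → ‖T τ 0 χ‖ ≤ B + ‖φ‖ * Real.exp (M * (s + 1 + r)) := by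
      intro τ hτ
      rw [← hrep τ hτ]
      have h1 := hclose τ hτ
      have heq : seg d r y hy τ + (seg d r xh hxh τ - seg d r y hy τ) = seg d r xh hxh τ := by
        abel
      calc ‖seg d r xh hxh τ‖
          = ‖seg d r y hy τ + (seg d r xh hxh τ - seg d r y hy τ)‖ := by rw [heq]
      _ ≤ ‖seg d r y hy τ‖ + ‖seg d r xh hxh τ - seg d r y hy τ‖ := norm_add_le _ _
      _ ≤ ‖φ‖ * Real.exp (M * (s + 1 + r)) + B := add_le_add (hybd τ hτ) h1
      _ = B + ‖φ‖ * Real.exp (M * (s + 1 + r)) := by ring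
    have hχmem : χ ∈ stableSub d r T 0 :=
      ⟨B + ‖φ‖ * Real.exp (M * (s + 1 + r)), hχbd⟩
    -- decompose φ - χ
    obtain ⟨u, huU, hun, hub⟩ := hdecomp (φ - χ)
    have hu_eq : u = φ := by
      have h1 : (φ - χ) - u ∈ stableSub d r T 0 := ⟨W * ‖φ - χ‖, fun τ hτ => hub τ hτ⟩
      have h2 : (φ - χ) - φ ∈ stableSub d r T 0 := by
        have heq : (φ - χ) - φ = -χ := by abel
        rw [heq]
        exact (stableSub d r T 0).neg_mem hχmem
      have h3 : φ - u ∈ stableSub d r T 0 := by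
        have heq : φ - u = ((φ - χ) - u) - ((φ - χ) - φ) := by abel
        rw [heq]
        exact (stableSub d r T 0).sub_mem h1 h2
      have h4 : φ - u ∈ U := U.sub_mem hφU huU
      have h5 : φ - u = 0 := (Submodule.disjoint_def.1 hUcompl.disjoint) _ h3 h4
      exact (sub_eq_zero.1 h5).symm
    rw [hu_eq] at hub
    -- ‖φ - χ‖ ≤ B
    have hξB : ‖φ - χ‖ ≤ B := by
      have h1 := hclose 0 le_rfl
      rw [hsegyx 0 hs0, hx0, ← hχdef] at h1
      calc ‖φ - χ‖ = ‖χ - φ‖ := norm_sub_rev _ _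
      _ ≤ B := h1
    -- final estimates
    have hfin1 : ‖T t 0 φ - seg d r xh hxh t‖ ≤ B := by
      have h1 := hclose t ht
      rw [hsegyx t hts, hxT t ht] at h1
      calc ‖T t 0 φ - seg d r xh hxh t‖ = ‖seg d r xh hxh t - T t 0 φ‖ := norm_sub_rev _ _
      _ ≤ B := h1
    have hfin2 : ‖seg d r xh hxh t‖ ≤ W * B := by
      rw [hrep t ht]
      have h1 := hub t ht
      have heq : (φ - χ) - φ = -χ := by abel
      rw [heq, map_neg, norm_neg] at h1
      exact le_trans h1 (mul_le_mul_of_nonneg_left hξB hW.le)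
    have hsum := norm_add_le (seg d r xh hxh t) (T t 0 φ - seg d r xh hxh t)
    have heq : seg d r xh hxh t + (T t 0 φ - seg d r xh hxh t) = T t 0 φ := by abel
    rw [heq] at hsum
    calc ‖T t 0 φ‖ ≤ ‖seg d r xh hxh t‖ + ‖T t 0 φ - seg d r xh hxh t‖ := hsum
    _ ≤ W * B + B := add_le_add hfin2 hfin1
    _ = (W + 1) * B := by ring
  -- conclusion
  have hδ₁ne : δ₁ ≠ 0 := ne_of_gt hδ₁
  have hcomp : ∀ u v : ℝ, (W + 1) * ((u + v) / δ₁) = (W + 1) * u / δ₁ + ((W + 1) / δ₁) * v := by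
    intro u v; field_simp
  have hA' : ∀ η, 0 < η → ‖T t 0 φ‖ ≤ (W + 1) * C₂ * b / δ₁ + ((W + 1) / δ₁) * η := by
    intro η hη
    have h1 := key η hη
    rw [hcomp (C₂ * b) η] at h1
    have h2 : (W + 1) * (C₂ * b) / δ₁ = (W + 1) * C₂ * b / δ₁ := by ring
    rw [h2] at h1
    exact h1
  have hA : ‖T t 0 φ‖ ≤ (W + 1) * C₂ * b / δ₁ :=
    le_of_forall_tail _ _ _ (by positivity) hA'
  calc ‖T t 0 φ‖ ≤ (W + 1) * C₂ * b / δ₁ := hA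
  _ ≤ ((W + 1) * C₂ / δ₁ + 1) * b := by
    have hre : (W + 1) * C₂ * b / δ₁ = ((W + 1) * C₂ / δ₁) * b := by ring
    rw [hre]
    nlinarith [hb0]
  _ = ((W + 1) * C₂ / δ₁ + 1) * ‖T s 0 φ‖ := by rw [hbdef]

end
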